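/- Let D be combinatorial data of an oriented virtual knot diagram with crossing set C, and suppose that for each crossing c ∈ C there is given combinatorial data of the oriented virtual knot diagram D_c obtained from D by smoothing against orientation at c (with its own finite crossing set, sign function and index function), so that for every positive integer n the integer ∇J_n(D_c) is the n-th dwrithe computed from the data of D_c. Then there exists a natural number n₀ such that for every integer n > n₀ the n-th F-polynomial coincides with the affine index polynomial: F^n_D(t, ℓ) = P_D(t). -/

import Mathlib

open LaurentPolynomial Finset

/-- Combinatorial data of an oriented virtual knot diagram: a finite set of
classical crossings with a sign function taking values in `{1, -1}` and an
index function. -/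
structure VKData where
  Crossing : Type
  [fin : Fintype Crossing]
  sgn : Crossing → ℤ
  sgn_pm : ∀ c, sgn c = 1 ∨ sgn c = -1
  Ind : Crossing → ℤ

attribute [instance] VKData.fin

/-- The `n`-th writhe `J_n(D)`. -/
def VKData.J (D : VKData) (n : ℤ) : ℤ :=
  ∑ c : D.Crossing, if D.Ind c = n then D.sgn c else 0

/-- The `n`-th dwrithe `∇J_n(D) = J_n(D) - J_{-n}(D)`. -/
def VKData.nablaJ (D : VKData) (n : ℤ) : ℤ := D.J n - D.J (-n)

/-- The affine index polynomial `P_D(t)`, in `ℤ[t, t⁻¹]`. -/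
noncomputable def VKData.P (D : VKData) : LaurentPolynomial ℤ :=
  ∑ c : D.Crossing, D.sgn c • (T (D.Ind c) - 1)

/-- `T_n(D)`, given the smoothing data `sm c = ∇J_n(D_c)`. -/
def VKData.Tset (D : VKData) (n : ℤ) (sm : D.Crossing → ℤ) : Finset D.Crossing :=
  Finset.univ.filter (fun c => |sm c| = |D.nablaJ n|)

/-- The `n`-th `F`-polynomial, in `ℤ[t, t⁻¹, ℓ, ℓ⁻¹]`, realized as Laurent
polynomials in the outer variable `ℓ` over Laurent polynomials in `t`. -/
noncomputable def VKData.F (D : VKData) (n : ℤ) (sm : D.Crossing → ℤ) :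
    LaurentPolynomial (LaurentPolynomial ℤ) :=
  (∑ c : D.Crossing, D.sgn c • (LaurentPolynomial.C (T (D.Ind c)) * T (sm c)))
  - (∑ c ∈ D.Tset n sm, D.sgn c • T (sm c))
  - (∑ c ∈ Finset.univ.filter (fun c => ¬ |sm c| = |D.nablaJ n|), D.sgn c • T (D.nablaJ n))

lemma nablaJ_zero (E : VKData) (n : ℤ)
    (h : ∀ d : E.Crossing, ((E.Ind d).natAbs : ℤ) < n) : E.nablaJ n = 0 := by
  unfold VKData.nablaJ VKData.J
  rw [Finset.sum_eq_zero, Finset.sum_eq_zero, sub_zero]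
  · intro d _
    have := h d
    rw [if_neg (by omega)]
  · intro d _
    have := h d
    rw [if_neg (by omega)]

/-- If each crossing `c` of `D` is given the full combinatorial data of the
smoothed diagram `D_c`, then there exists `n₀` such that for every integer
`n > n₀` the `n`-th `F`-polynomial coincides with the affine index
polynomial. -/
theorem F_eventually_eq_P (D : VKData) (Dc : D.Crossing → VKData) :
    ∃ n₀ : ℕ, ∀ n : ℤ, (n₀ : ℤ) < n →
      D.F n (fun c => (Dc c).nablaJ n) = LaurentPolynomial.C D.P := by
  classical
  refine ⟨(Finset.univ.sup fun c => (D.Ind c).natAbs) +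
    (Finset.univ.sup fun c : D.Crossing =>
      Finset.univ.sup fun d => ((Dc c).Ind d).natAbs), fun n hn => ?_⟩
  have hD : D.nablaJ n = 0 := by
    apply nablaJ_zero
    intro d
    have h1 := Finset.le_sup (f := fun c => (D.Ind c).natAbs) (Finset.mem_univ d)
    omega
  have hDc : ∀ c, (Dc c).nablaJ n = 0 := by
    intro c
    apply nablaJ_zero
    intro d
    have h1 := Finset.le_sup (f := fun d => ((Dc c).Ind d).natAbs) (Finset.mem_univ d)
    have h2 := Finset.le_sup
      (f := fun c : D.Crossing => Finset.univ.sup fun d => ((Dc c).Ind d).natAbs)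
      (Finset.mem_univ c)
    have h3 := le_trans h1 h2
    omega
  unfold VKData.F VKData.Tset
  simp only [hDc, hD, abs_zero, not_true_eq_false, Finset.filter_true,
    Finset.filter_false, Finset.sum_empty, sub_zero, T_zero, mul_one]
  rw [VKData.P, map_sum]
  rw [← Finset.sum_sub_distrib]
  refine Finset.sum_congr rfl fun c _ => ?_
  simp [zsmul_eq_mul, mul_sub, map_sub, map_mul, map_intCast]
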